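/- arXiv:1909.09206 — 3 statements merged into one kernel-verified Lean document; each statement's English description precedes it below -/
import Mathlib

section
/- Let S_k denote the k-th elementary symmetric polynomial in N complex variables and let p_k (k = 1,...,N) be polynomials in N variables with deg p_k ≤ k-1. Then the set of solutions (x₁,...,x_N) ∈ ℂ^N of the system S_k(x₁,...,x_N) = p_k(x₁,...,x_N) for k = 1,...,N is nonempty and finite. -/
open MvPolynomial

namespace EsymmAux


lemma homogeneousComponent_mul_right {σ : Type*} (c F : MvPolynomial σ ℂ) (w r : ℕ)
    (hF : F.IsHomogeneous w) :
    homogeneousComponent r (c * F) =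
      if w ≤ r then homogeneousComponent (r - w) c * F else 0 := by
  have hdecomp : c * F = ∑ i ∈ Finset.range (c.totalDegree + 1),
      homogeneousComponent i c * F := by
    rw [← Finset.sum_mul, sum_homogeneousComponent]
  rw [hdecomp, map_sum]
  have hterm : ∀ i, homogeneousComponent r (homogeneousComponent i c * F) =
      if r = i + w then homogeneousComponent i c * F else 0 := fun i =>
    homogeneousComponent_of_mem ((homogeneousComponent_isHomogeneous i c).mul hF)
  simp_rw [hterm]
  by_cases hw : w ≤ r
  · rw [if_pos hw]
    have hc : ∀ i ∈ Finset.range (c.totalDegree + 1),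
        (if r = i + w then homogeneousComponent i c * F else 0)
          = (if i = r - w then homogeneousComponent i c * F else 0) := by
      intro i _
      exact if_congr (by omega) rfl rfl
    rw [Finset.sum_congr rfl hc, Finset.sum_ite_eq' (Finset.range (c.totalDegree + 1))]
    by_cases hmem : r - w ∈ Finset.range (c.totalDegree + 1)
    · rw [if_pos hmem]
    · rw [if_neg hmem]
      have : c.totalDegree < r - w := by
        simp only [Finset.mem_range] at hmem; omega
      rw [homogeneousComponent_eq_zero _ _ this, zero_mul]
  · rw [if_neg hw]
    refine Finset.sum_eq_zero fun i _ => ?_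
    rw [if_neg (by omega)]

lemma exists_homog_decomp {σ : Type*} {n : ℕ} {F : Fin n → MvPolynomial σ ℂ} {w : Fin n → ℕ}
    (hF : ∀ k, (F k).IsHomogeneous (w k)) {x : MvPolynomial σ ℂ} {r : ℕ}
    (hx : x.IsHomogeneous r) (hmem : x ∈ Ideal.span (Set.range F)) :
    ∃ c : Fin n → MvPolynomial σ ℂ,
      (∑ k, c k * F k = x) ∧
        ∀ k, (c k = 0) ∨ (w k ≤ r ∧ (c k).IsHomogeneous (r - w k)) := by
  obtain ⟨c', hc'⟩ := Ideal.mem_span_range_iff_exists_fun.mp hmem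
  refine ⟨fun k => if w k ≤ r then homogeneousComponent (r - w k) (c' k) else 0, ?_, ?_⟩
  · have h1 := congrArg (homogeneousComponent r) hc'
    rw [map_sum] at h1
    rw [homogeneousComponent_of_mem ((mem_homogeneousSubmodule r x).mpr hx), if_pos rfl] at h1
    rw [← h1]
    refine Finset.sum_congr rfl fun k _ => ?_
    rw [homogeneousComponent_mul_right _ _ _ _ (hF k)]
    dsimp only
    split_ifs with h
    · rfl
    · rw [zero_mul]
  · intro k
    by_cases h : w k ≤ r
    · exact Or.inr ⟨h, by dsimp only; rw [if_pos h]; exact homogeneousComponent_isHomogeneous _ _⟩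
    · exact Or.inl (if_neg h)



lemma degree_eq_sum {m : ℕ} (μ : Fin m →₀ ℕ) : μ.degree = ∑ i, μ i := by
  rw [Finsupp.degree]
  exact Finset.sum_subset (Finset.subset_univ _)
    (fun i _ hi => Finsupp.notMem_support_iff.mp hi)

lemma degree_add {m : ℕ} (μ ν : Fin m →₀ ℕ) : (μ + ν).degree = μ.degree + ν.degree := by
  simp only [degree_eq_sum, Finsupp.add_apply, Finset.sum_add_distrib]

lemma degree_single {m : ℕ} (j : Fin m) (n : ℕ) : (Finsupp.single j n).degree = n := by
  rw [degree_eq_sum]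
  simp [Finsupp.single_apply]

lemma mem_support_degree_eq {σ : Type*} {φ : MvPolynomial σ ℂ} {s : ℕ}
    (hφ : φ.IsHomogeneous s) {κ : σ →₀ ℕ} (hκ : κ ∈ φ.support) : κ.degree = s := by
  have := hφ (MvPolynomial.mem_support_iff.mp hκ)
  rw [Finsupp.degree_eq_weight_one]; exact this

lemma degree_le_totalDegree {σ : Type*} {φ : MvPolynomial σ ℂ} {κ : σ →₀ ℕ}
    (hκ : κ ∈ φ.support) : κ.degree ≤ φ.totalDegree := by
  rw [MvPolynomial.totalDegree]
  exact Finset.le_sup (f := fun s => s.sum fun _ e => e) hκ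

lemma degree_finsupp_sum_eq {σ : Type*} {κ : σ →₀ ℕ} :
    κ.degree = κ.sum fun _ e => e := rfl

variable {N : ℕ}

lemma degree_mapDomain (μ : Fin N →₀ ℕ) :
    (Finsupp.mapDomain Fin.succ μ : Fin (N + 1) →₀ ℕ).degree = μ.degree := by
  rw [degree_eq_sum, degree_eq_sum, Fin.sum_univ_succ]
  have h0 : (Finsupp.mapDomain Fin.succ μ : Fin (N + 1) →₀ ℕ) 0 = 0 :=
    Finsupp.mapDomain_notin_range _ _ (by
      rintro ⟨j, hj⟩
      exact Fin.succ_ne_zero j hj)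
  have hS : ∀ j : Fin N, (Finsupp.mapDomain Fin.succ μ : Fin (N + 1) →₀ ℕ) j.succ = μ j :=
    fun j => Finsupp.mapDomain_apply (Fin.succ_injective N) μ j
  simp [h0, hS]

/-- Degree-`D` homogenization, with variable `0` as the homogenizing variable. -/
noncomputable def Hg (q : MvPolynomial (Fin N) ℂ) (D : ℕ) :
    MvPolynomial (Fin (N + 1)) ℂ :=
  ∑ μ ∈ q.support, monomial
    (Finsupp.mapDomain Fin.succ μ + Finsupp.single 0 (D - μ.degree)) (coeff μ q)

lemma Hg_isHomogeneous {q : MvPolynomial (Fin N) ℂ} {D : ℕ} (h : q.totalDegree ≤ D) :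
    (Hg q D).IsHomogeneous D := by
  apply IsHomogeneous.sum
  intro μ hμ
  apply isHomogeneous_monomial
  rw [degree_add, degree_single, degree_mapDomain]
  have : μ.degree ≤ D := le_trans (degree_le_totalDegree hμ) h
  omega

lemma eval_monomial_hg (z : Fin (N + 1) → ℂ) (μ : Fin N →₀ ℕ) (a : ℂ) (e : ℕ) :
    eval z (monomial (Finsupp.mapDomain Fin.succ μ + Finsupp.single 0 e) a)
      = a * z 0 ^ e * ∏ j : Fin N, z j.succ ^ μ j := by
  rw [eval_monomial, Finsupp.prod_fintype _ _ (fun i => pow_zero _), Fin.prod_univ_succ]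
  have h0 : (Finsupp.mapDomain Fin.succ μ + Finsupp.single 0 e : Fin (N + 1) →₀ ℕ) 0 = e := by
    rw [Finsupp.add_apply, Finsupp.mapDomain_notin_range _ _ (by
      rintro ⟨j, hj⟩
      exact Fin.succ_ne_zero j hj), Finsupp.single_eq_same, zero_add]
  have hS : ∀ j : Fin N,
      (Finsupp.mapDomain Fin.succ μ + Finsupp.single 0 e : Fin (N + 1) →₀ ℕ) j.succ = μ j := by
    intro j
    rw [Finsupp.add_apply, Finsupp.mapDomain_apply (Fin.succ_injective N),
      Finsupp.single_eq_of_ne' (Fin.succ_ne_zero j).symm, add_zero]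
  rw [h0]
  have : ∀ j : Fin N, z j.succ ^ ((Finsupp.mapDomain Fin.succ μ
      + Finsupp.single 0 e : Fin (N + 1) →₀ ℕ) j.succ) = z j.succ ^ μ j :=
    fun j => by rw [hS j]
  rw [Finset.prod_congr rfl (fun j _ => this j)]
  ring

lemma Hg_eval_of_zero {q : MvPolynomial (Fin N) ℂ} {D : ℕ} (h : q.totalDegree < D)
    (z : Fin (N + 1) → ℂ) (hz : z 0 = 0) : eval z (Hg q D) = 0 := by
  rw [Hg, map_sum]
  refine Finset.sum_eq_zero fun μ hμ => ?_
  rw [eval_monomial_hg, hz, zero_pow, mul_zero, zero_mul]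
  have : μ.degree ≤ q.totalDegree := degree_le_totalDegree hμ
  omega

lemma Hg_eval_of_ne_zero {q : MvPolynomial (Fin N) ℂ} {D : ℕ} (h : q.totalDegree ≤ D)
    (z : Fin (N + 1) → ℂ) (hz : z 0 ≠ 0) :
    eval z (Hg q D) = z 0 ^ D * eval (fun j => z j.succ / z 0) q := by
  rw [Hg, map_sum, eval_eq' (fun j => z j.succ / z 0) q, Finset.mul_sum]
  refine Finset.sum_congr rfl fun μ hμ => ?_
  rw [eval_monomial_hg]
  have hdd : μ.degree ≤ D := le_trans (degree_le_totalDegree hμ) h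
  have h1 : ∏ j : Fin N, (z j.succ / z 0) ^ μ j
      = (∏ j : Fin N, z j.succ ^ μ j) * (z 0 ^ μ.degree)⁻¹ := by
    simp_rw [div_pow]
    rw [Finset.prod_div_distrib, Finset.prod_pow_eq_pow_sum, div_eq_mul_inv, ← degree_eq_sum]
  rw [h1, pow_sub₀ _ hz hdd]
  ring

lemma esymm_isHomogeneous (m n : ℕ) : (esymm (Fin m) ℂ n).IsHomogeneous n := by
  rw [esymm_eq_sum_monomial]
  apply IsHomogeneous.sum
  intro t ht
  apply isHomogeneous_monomial
  rw [degree_eq_sum]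
  have : ∀ j : Fin m, (∑ i ∈ t, Finsupp.single i 1) j = ∑ i ∈ t, Finsupp.single i 1 j :=
    fun j => Finsupp.finset_sum_apply t _ j
  rw [Finset.sum_congr rfl (fun j _ => this j), Finset.sum_comm]
  have hin : ∀ i ∈ t, (∑ j : Fin m, (Finsupp.single i 1 : Fin m →₀ ℕ) j) = 1 := by
    intro i _
    rw [← degree_eq_sum, degree_single]
  rw [Finset.sum_congr rfl hin, Finset.sum_const, smul_eq_mul, mul_one]
  exact (Finset.mem_powersetCard.mp ht).2

lemma eval_homog_smul {m : ℕ} {φ : MvPolynomial (Fin m) ℂ} {n : ℕ}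
    (h : φ.IsHomogeneous n) (τ : ℂ) (x : Fin m → ℂ) :
    eval (fun i => τ * x i) φ = τ ^ n * eval x φ := by
  rw [eval_eq', eval_eq', Finset.mul_sum]
  refine Finset.sum_congr rfl fun μ hμ => ?_
  have hdeg : ∑ i, μ i = n := by
    rw [← degree_eq_sum]; exact mem_support_degree_eq h hμ
  simp_rw [mul_pow]
  rw [Finset.prod_mul_distrib, Finset.prod_pow_eq_pow_sum, hdeg]
  ring

lemma core {M : ℕ} (F : Fin (M + 1) → MvPolynomial (Fin (M + 2)) ℂ)
    (hF : ∀ k, (F k).IsHomogeneous ((k : ℕ) + 1))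
    (hrad : ∀ j : Fin (M + 2), ∃ r : ℕ,
      (X j : MvPolynomial (Fin (M + 2)) ℂ) ^ r ∈ Ideal.span (Set.range F)) :
    False := by
  classical
  choose r hr using hrad
  set D : ℕ := (∑ j, r j) + 1 with hD
  set wt : (Fin (M + 1) → ℕ) → ℕ := fun α => ∑ k, α k * ((k : ℕ) + 1) with hwt
  set G : ℕ → Set (MvPolynomial (Fin (M + 2)) ℂ) := fun s =>
    {q | ∃ (α : Fin (M + 1) → ℕ) (ν : Fin (M + 2) →₀ ℕ),
      wt α + ν.degree = s ∧ ν.degree < D ∧ q = (∏ k, F k ^ α k) * monomial ν 1} with hG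
  set W : ℕ → Submodule ℂ (MvPolynomial (Fin (M + 2)) ℂ) :=
    fun s => Submodule.span ℂ (G s) with hW
  have hmul : ∀ (e : ℕ) (k : Fin (M + 1)) (q : MvPolynomial (Fin (M + 2)) ℂ),
      q ∈ W e → q * F k ∈ W (e + ((k : ℕ) + 1)) := by
    intro e k q hq
    have hle : (W e).map (LinearMap.mulRight ℂ (F k)) ≤ W (e + ((k : ℕ) + 1)) := by
      rw [hW, Submodule.map_span, Submodule.span_le]
      rintro _ ⟨q', ⟨α, ν, hwtd, hν, rfl⟩, rfl⟩
      apply Submodule.subset_span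
      refine ⟨Function.update α k (α k + 1), ν, ?_, hν, ?_⟩
      · have h1 : wt (Function.update α k (α k + 1)) = wt α + ((k : ℕ) + 1) := by
          rw [hwt]
          dsimp only
          have hupd : ∀ x ∈ Finset.univ.erase k,
              Function.update α k (α k + 1) x * ((x : ℕ) + 1) = α x * ((x : ℕ) + 1) :=
            fun x hx => by rw [Function.update_of_ne (Finset.ne_of_mem_erase hx)]
          rw [← Finset.add_sum_erase _ _ (Finset.mem_univ k), Finset.sum_congr rfl hupd,
            Function.update_self,
            ← Finset.add_sum_erase _ (fun k' => α k' * ((k' : ℕ) + 1)) (Finset.mem_univ k)]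
          ring
        omega
      · have h2 : (∏ k', F k' ^ (Function.update α k (α k + 1) k'))
            = (∏ k', F k' ^ α k') * F k := by
          have hupd : ∀ x ∈ Finset.univ.erase k,
              F x ^ (Function.update α k (α k + 1) x) = F x ^ α x :=
            fun x hx => by rw [Function.update_of_ne (Finset.ne_of_mem_erase hx)]
          rw [← Finset.mul_prod_erase _ _ (Finset.mem_univ k), Finset.prod_congr rfl hupd,
            Function.update_self,
            ← Finset.mul_prod_erase _ (fun k' => F k' ^ α k') (Finset.mem_univ k), pow_succ]
          ring
        rw [h2, LinearMap.mulRight_apply]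
        ring
    exact hle ⟨q, hq, rfl⟩
  have key : ∀ s : ℕ, ∀ μ : Fin (M + 2) →₀ ℕ, μ.degree = s →
      (monomial μ 1 : MvPolynomial (Fin (M + 2)) ℂ) ∈ W s := by
    intro s
    induction s using Nat.strong_induction_on with
    | _ s IH =>
    intro μ hμ
    by_cases hs : s < D
    · exact Submodule.subset_span ⟨0, μ, by simp [hwt, hμ], by omega, by simp⟩
    · have hex : ∃ j, r j ≤ μ j := by
        by_contra hcon
        push_neg at hcon
        have h3 : ∑ j, μ j < ∑ j, r j :=
          Finset.sum_lt_sum_of_nonempty Finset.univ_nonempty (fun j _ => hcon j)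
        rw [← degree_eq_sum] at h3
        omega
      obtain ⟨j, hj⟩ := hex
      set μ'' : Fin (M + 2) →₀ ℕ := μ - Finsupp.single j (r j) with hμ''def
      have hsum : Finsupp.single j (r j) + μ'' = μ := by
        ext i
        have hle : Finsupp.single j (r j) i ≤ μ i := by
          rcases eq_or_ne i j with rfl | hne
          · rwa [Finsupp.single_eq_same]
          · rw [Finsupp.single_eq_of_ne' (Ne.symm hne)]
            exact Nat.zero_le _
        simp only [Finsupp.add_apply, hμ''def, Finsupp.tsub_apply]
        omega
      have hdeg'' : r j + μ''.degree = s := by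
        have h4 := degree_add (Finsupp.single j (r j)) μ''
        rw [hsum, degree_single, hμ] at h4
        omega
      have hmono : (monomial μ 1 : MvPolynomial (Fin (M + 2)) ℂ)
          = X j ^ (r j) * monomial μ'' 1 := by
        rw [X_pow_eq_monomial, monomial_mul, one_mul, hsum]
      have hXhom : ((X j : MvPolynomial (Fin (M + 2)) ℂ) ^ (r j)).IsHomogeneous (r j) := by
        simpa using (isHomogeneous_X ℂ j).pow (r j)
      obtain ⟨c, hcsum, hck⟩ := exists_homog_decomp (w := fun k => (k : ℕ) + 1) hF hXhom (hr j)
      have heq : (monomial μ 1 : MvPolynomial (Fin (M + 2)) ℂ)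
          = ∑ k, (c k * monomial μ'' 1) * F k := by
        rw [hmono, ← hcsum, Finset.sum_mul]
        exact Finset.sum_congr rfl fun k _ => by ring
      rw [heq]
      refine Submodule.sum_mem _ fun k _ => ?_
      rcases hck k with h0 | ⟨hwk, hhom⟩
      · simp [h0]
      · have hghom : (c k * monomial μ'' 1).IsHomogeneous
            ((r j - ((k : ℕ) + 1)) + μ''.degree) :=
          hhom.mul (isHomogeneous_monomial _ rfl)
        have hks : (k : ℕ) + 1 ≤ s := le_trans hwk (by omega)
        have hgdeg : (r j - ((k : ℕ) + 1)) + μ''.degree = s - ((k : ℕ) + 1) := by omega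
        have hmem : c k * monomial μ'' 1 ∈ W (s - ((k : ℕ) + 1)) := by
          rw [MvPolynomial.as_sum (c k * monomial μ'' 1)]
          refine Submodule.sum_mem _ fun κ hκ => ?_
          have hκd : κ.degree = s - ((k : ℕ) + 1) := by
            rw [← hgdeg]; exact mem_support_degree_eq hghom hκ
          have hmono2 : (monomial κ (coeff κ (c k * monomial μ'' 1)) :
              MvPolynomial (Fin (M + 2)) ℂ)
              = coeff κ (c k * monomial μ'' 1) • monomial κ 1 := by
            rw [smul_monomial, smul_eq_mul, mul_one]
          rw [hmono2]
          exact Submodule.smul_mem _ _ (IH _ (by omega) κ hκd)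
        have := hmul _ k _ hmem
        rwa [Nat.sub_add_cancel hks] at this
  -- counting part
  classical
  have hD1 : 1 ≤ D := by omega
  set c : ℕ := (M + 2) ^ (M + 1) * D ^ (M + 2) with hc
  have hc1 : 1 ≤ c := by
    rw [hc]; exact Nat.one_le_iff_ne_zero.mpr (by positivity)
  set d : ℕ := (M + 1) * c with hd'
  -- the injective monomial family of degree d
  set μof : (Fin (M + 1) → Fin (c + 1)) → (Fin (M + 2) →₀ ℕ) := fun ν =>
    Finsupp.equivFunOnFinite.symm (Fin.cons (d - ∑ i, (ν i : ℕ)) (fun i => (ν i : ℕ))) with hμof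
  have hsumle : ∀ ν : Fin (M + 1) → Fin (c + 1), (∑ i, (ν i : ℕ)) ≤ d := by
    intro ν
    calc (∑ i, (ν i : ℕ)) ≤ ∑ _i : Fin (M + 1), c :=
          Finset.sum_le_sum fun i _ => Nat.lt_succ_iff.mp (ν i).isLt
      _ = (M + 1) * c := by rw [Finset.sum_const, Finset.card_univ, Fintype.card_fin, smul_eq_mul]
  have hμof_apply0 : ∀ ν, (μof ν) 0 = d - ∑ i, (ν i : ℕ) := fun ν => rfl
  have hμof_applyS : ∀ ν i, (μof ν) i.succ = (ν i : ℕ) := fun ν i => by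
    show (Fin.cons (d - ∑ i, (ν i : ℕ)) (fun i => (ν i : ℕ)) : Fin (M+2) → ℕ) i.succ = _
    rw [Fin.cons_succ]
  have hμof_deg : ∀ ν, (μof ν).degree = d := by
    intro ν
    rw [degree_eq_sum]
    rw [Fin.sum_univ_succ]
    have h0 := hμof_apply0 ν
    have hS := hμof_applyS ν
    simp only [h0, hS]
    have := hsumle ν
    omega
  have hinj : Function.Injective μof := by
    intro ν ν' h
    funext i
    have := congrArg (fun f => f i.succ) h
    simp only [hμof_applyS] at this
    exact Fin.ext this
  -- the finite spanning set
  set hmap : (Fin (M + 1) → Fin (d + 1)) × (Fin (M + 2) → Fin D) →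
      MvPolynomial (Fin (M + 2)) ℂ := fun z =>
    (∏ k, F k ^ (z.1 k : ℕ)) *
      monomial (Finsupp.equivFunOnFinite.symm fun i => (z.2 i : ℕ)) 1 with hhmap
  set A : Finset ((Fin (M + 1) → Fin (d + 1)) × (Fin (M + 2) → Fin D)) :=
    Finset.univ.filter (fun z =>
      wt (fun k => (z.1 k : ℕ)) + (∑ i, ((z.2 i : ℕ))) = d) with hA
  have hGsub : G d ⊆ ↑(A.image hmap) := by
    rw [hG]
    rintro q ⟨α, ν, hwtd, hνD, rfl⟩
    have hαk : ∀ k, α k < d + 1 := by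
      intro k
      have h1 : α k * ((k : ℕ) + 1) ≤ wt α := by
        rw [hwt]
        exact Finset.single_le_sum (f := fun k' : Fin (M + 1) => α k' * ((k' : ℕ) + 1))
          (fun k' _ => Nat.zero_le _) (Finset.mem_univ k)
      have h2 : α k ≤ α k * ((k : ℕ) + 1) := Nat.le_mul_of_pos_right _ (by omega)
      omega
    have hνi : ∀ i, ν i < D := by
      intro i
      exact lt_of_le_of_lt (Finsupp.le_degree i ν) hνD
    refine Finset.mem_coe.mpr (Finset.mem_image.mpr
      ⟨⟨fun k => ⟨α k, hαk k⟩, fun i => ⟨ν i, hνi i⟩⟩, ?_, ?_⟩)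
    · rw [hA]
      refine Finset.mem_filter.mpr ⟨Finset.mem_univ _, ?_⟩
      have : (∑ i, ((ν i : ℕ))) = ν.degree := (degree_eq_sum ν).symm
      simpa [this] using hwtd
    · rw [hhmap]
      dsimp only
      have hcoe : Finsupp.equivFunOnFinite.symm
          (fun i => ((⟨ν i, hνi i⟩ : Fin D) : ℕ)) = ν := by
        have : (fun i => ((⟨ν i, hνi i⟩ : Fin D) : ℕ)) = ⇑ν := rfl
        rw [this]
        exact Finsupp.equivFunOnFinite_symm_coe ν
      rw [hcoe]
  have hWd : W d ≤ Submodule.span ℂ ↑(A.image hmap) := by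
    rw [hW]
    exact Submodule.span_mono hGsub
  -- cardinality bound
  have hcard : A.card ≤ (d + 1) ^ M * D ^ (M + 2) := by
    have hinjA : Set.InjOn (fun z : (Fin (M + 1) → Fin (d + 1)) × (Fin (M + 2) → Fin D) =>
        ((fun k : Fin M => z.1 k.succ), z.2)) ↑A := by
      rintro z hz z' hz' hzz
      rw [hA] at hz hz'
      simp only [Finset.coe_filter, Set.mem_setOf_eq] at hz hz'
      simp only [Prod.mk.injEq] at hzz
      obtain ⟨h1f, h2⟩ := hzz
      have h1s : ∀ k : Fin M, z.1 k.succ = z'.1 k.succ := fun k => congrFun h1f k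
      have hwz := hz.2
      have hwz' := hz'.2
      rw [h2] at hwz
      have hwteq : wt (fun k => (z.1 k : ℕ)) = wt (fun k => (z'.1 k : ℕ)) := by omega
      rw [hwt] at hwteq
      simp only at hwteq
      rw [Fin.sum_univ_succ, Fin.sum_univ_succ] at hwteq
      have hrest : (∑ k : Fin M, (z.1 k.succ : ℕ) * ((k.succ : ℕ) + 1))
          = ∑ k : Fin M, (z'.1 k.succ : ℕ) * ((k.succ : ℕ) + 1) :=
        Finset.sum_congr rfl fun k _ => by rw [h1s k]
      have h0 : (z.1 0 : ℕ) = (z'.1 0 : ℕ) := by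
        simp only [Fin.val_zero] at hwteq ⊢
        omega
      have h1 : z.1 = z'.1 := by
        funext k
        induction k using Fin.cases with
        | zero => exact Fin.ext h0
        | succ i => exact h1s i
      exact Prod.ext h1 h2
    have hAle := Finset.card_le_card_of_injOn _ (fun z (_ : z ∈ A) => Finset.mem_univ
      (((fun k : Fin M => z.1 k.succ), z.2))) hinjA
    rw [Finset.card_univ] at hAle
    calc A.card ≤ Fintype.card ((Fin M → Fin (d + 1)) × (Fin (M + 2) → Fin D)) := hAle
      _ = (d + 1) ^ M * D ^ (M + 2) := by
          rw [Fintype.card_prod, Fintype.card_fun, Fintype.card_fun, Fintype.card_fin,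
            Fintype.card_fin, Fintype.card_fin, Fintype.card_fin]
  -- linear independence
  have hli : LinearIndependent ℂ
      (fun ν : Fin (M + 1) → Fin (c + 1) =>
        (monomial (μof ν) 1 : MvPolynomial (Fin (M + 2)) ℂ)) := by
    have hb := (basisMonomials (Fin (M + 2)) ℂ).linearIndependent
    have := hb.comp μof hinj
    simp only [coe_basisMonomials] at this; exact this
  set Wspan := Submodule.span ℂ (↑(A.image hmap) : Set (MvPolynomial (Fin (M + 2)) ℂ))
    with hWspan
  have hmemW : ∀ ν : Fin (M + 1) → Fin (c + 1),
      (monomial (μof ν) 1 : MvPolynomial (Fin (M + 2)) ℂ) ∈ Wspan :=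
    fun ν => hWd (key d (μof ν) (hμof_deg ν))
  haveI : FiniteDimensional ℂ Wspan := by
    rw [hWspan]
    exact FiniteDimensional.span_finset ℂ _
  set v : (Fin (M + 1) → Fin (c + 1)) → Wspan := fun ν => ⟨monomial (μof ν) 1, hmemW ν⟩
    with hv
  have hliv : LinearIndependent ℂ v := by
    apply LinearIndependent.of_comp Wspan.subtype
    convert hli using 1
    rfl
  have hcount := hliv.fintype_card_le_finrank
  have hrank : Module.finrank ℂ Wspan ≤ (A.image hmap).card :=
    finrank_span_finset_le_card (A.image hmap)
  have hcardimg : (A.image hmap).card ≤ A.card := Finset.card_image_le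
  have hcι : Fintype.card (Fin (M + 1) → Fin (c + 1)) = (c + 1) ^ (M + 1) := by
    simp [Fintype.card_fun]
  -- final arithmetic
  have hfinal : (c + 1) ^ (M + 1) ≤ (d + 1) ^ M * D ^ (M + 2) := by
    rw [← hcι]
    exact le_trans hcount (le_trans hrank (le_trans hcardimg hcard))
  have h1 : d + 1 ≤ (M + 2) * c := by
    calc d + 1 = (M + 1) * c + 1 := by rw [hd']
      _ ≤ (M + 1) * c + c := by omega
      _ = (M + 2) * c := by ring
  have h2 : (d + 1) ^ M * D ^ (M + 2) ≤ ((M + 2) ^ M * c ^ M) * D ^ (M + 2) := by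
    have := Nat.pow_le_pow_left h1 M
    rw [mul_pow] at this
    exact Nat.mul_le_mul_right _ this
  have h3 : ((M + 2) ^ M * c ^ M) * D ^ (M + 2) < c ^ (M + 1) := by
    have hlt : (M + 2) ^ M * D ^ (M + 2) < c := by
      rw [hc]
      have : (M + 2) ^ M < (M + 2) ^ (M + 1) :=
        Nat.pow_lt_pow_right (by omega) (Nat.lt_succ_self M)
      have hDpos : 0 < D ^ (M + 2) := by positivity
      calc (M + 2) ^ M * D ^ (M + 2) < (M + 2) ^ (M + 1) * D ^ (M + 2) :=
            (Nat.mul_lt_mul_right hDpos).mpr this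
        _ = _ := rfl
    calc ((M + 2) ^ M * c ^ M) * D ^ (M + 2)
        = ((M + 2) ^ M * D ^ (M + 2)) * c ^ M := by ring
      _ < c * c ^ M := (Nat.mul_lt_mul_right (pow_pos (by omega : 0 < c) M)).mpr hlt
      _ = c ^ (M + 1) := by ring
  have h4 : c ^ (M + 1) ≤ (c + 1) ^ (M + 1) := Nat.pow_le_pow_left (by omega) _
  omega




lemma aeval_eq_eval {N : ℕ} (x : Fin N → ℂ) (q : MvPolynomial (Fin N) ℂ) :
    (aeval x) q = eval x q := by
  rw [aeval_def, eval₂_eq_eval_map, Algebra.algebraMap_self, map_id]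

lemma multiset_esymm_zero (s : Multiset ℂ) : s.esymm 0 = 1 := by
  simp [Multiset.esymm, Multiset.powersetCard_zero_left]

lemma esymm_vanish {N : ℕ} (hN : 1 ≤ N) (x : Fin N → ℂ)
    (h : ∀ k : Fin N, eval x (esymm (Fin N) ℂ ((k : ℕ) + 1)) = 0) : x = 0 := by
  classical
  set s : Multiset ℂ := Multiset.map x Finset.univ.val with hs
  have hcard : Multiset.card s = N := by simp [hs]
  have hes : ∀ j, 1 ≤ j → j ≤ N → s.esymm j = 0 := by
    intro j hj1 hjN
    have hk : j - 1 < N := by omega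
    have hh := h ⟨j - 1, hk⟩
    simp only [Fin.val_mk] at hh
    have hj' : j - 1 + 1 = j := by omega
    rw [hj'] at hh
    rw [hs, ← aeval_esymm_eq_multiset_esymm (Fin N) ℂ j x, aeval_eq_eval, hh]
  have hprod : (s.map fun t => Polynomial.X - Polynomial.C t).prod
      = Polynomial.X ^ N := by
    rw [Multiset.prod_X_sub_X_eq_sum_esymm, hcard]
    rw [Finset.sum_eq_single 0]
    · rw [multiset_esymm_zero]; simp
    · intro j hj hj0
      rw [hes j (by omega) (by simp only [Finset.mem_range] at hj; omega)]
      simp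
    · intro h0
      exact absurd (Finset.mem_range.mpr (by omega)) h0
  funext i
  have hmem : x i ∈ s := by
    rw [hs]
    exact Multiset.mem_map.mpr ⟨i, Finset.mem_univ_val _, rfl⟩
  have hEv : Polynomial.eval (x i) ((s.map fun t => Polynomial.X - Polynomial.C t).prod)
      = 0 := by
    rw [Polynomial.eval_multiset_prod]
    apply Multiset.prod_eq_zero
    rw [Multiset.map_map]
    exact Multiset.mem_map.mpr ⟨x i, hmem, by simp⟩
  rw [hprod] at hEv
  simp only [Polynomial.eval_pow, Polynomial.eval_X] at hEv
  have : x i = 0 := pow_eq_zero_iff (by omega) |>.mp hEv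
  simpa using this

lemma Xi_pow_eq {N : ℕ} (hN : 1 ≤ N) (i : Fin N) :
    (X i : MvPolynomial (Fin N) ℂ) ^ N
      = ∑ k : Fin N, (-1 : MvPolynomial (Fin N) ℂ) ^ (k : ℕ)
          * esymm (Fin N) ℂ ((k : ℕ) + 1) * X i ^ (N - 1 - (k : ℕ)) := by
  classical
  set s : Multiset (MvPolynomial (Fin N) ℂ) :=
    Multiset.map (X : Fin N → MvPolynomial (Fin N) ℂ) Finset.univ.val with hs
  have hcard : Multiset.card s = N := by simp [hs]
  have hesymm : ∀ j, s.esymm j = esymm (Fin N) ℂ j := by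
    intro j
    rw [hs, ← aeval_esymm_eq_multiset_esymm (Fin N) ℂ j X, aeval_X_left]
    rfl
  have hmem : (X i : MvPolynomial (Fin N) ℂ) ∈ s := by
    rw [hs]
    exact Multiset.mem_map.mpr ⟨i, Finset.mem_univ_val _, rfl⟩
  have hEv : Polynomial.eval (X i : MvPolynomial (Fin N) ℂ)
      ((s.map fun t => Polynomial.X - Polynomial.C t).prod) = 0 := by
    rw [Polynomial.eval_multiset_prod]
    apply Multiset.prod_eq_zero
    rw [Multiset.map_map]
    exact Multiset.mem_map.mpr ⟨X i, hmem, by simp⟩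
  rw [Multiset.prod_X_sub_X_eq_sum_esymm, hcard] at hEv
  simp only [Polynomial.eval_finset_sum, Polynomial.eval_mul, Polynomial.eval_pow,
    Polynomial.eval_neg, Polynomial.eval_one, Polynomial.eval_C, Polynomial.eval_X,
    hesymm] at hEv
  rw [Finset.sum_range_succ'] at hEv
  simp only [pow_zero, Nat.sub_zero, one_mul, esymm_zero] at hEv
  have h2 : (X i : MvPolynomial (Fin N) ℂ) ^ N
      = ∑ j ∈ Finset.range N, (-1 : MvPolynomial (Fin N) ℂ) ^ j
          * esymm (Fin N) ℂ (j + 1) * X i ^ (N - (j + 1)) := by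
    have h3 := eq_neg_of_add_eq_zero_right hEv
    rw [h3, ← Finset.sum_neg_distrib]
    refine Finset.sum_congr rfl fun j _ => ?_
    ring
  rw [h2, ← Fin.sum_univ_eq_sum_range
    (fun j => (-1 : MvPolynomial (Fin N) ℂ) ^ j * esymm (Fin N) ℂ (j + 1)
      * X i ^ (N - (j + 1))) N]
  refine Finset.sum_congr rfl fun k _ => ?_
  congr 2
  omega




lemma solset_finite {N : ℕ} (hN : 1 ≤ N) (p : Fin N → MvPolynomial (Fin N) ℂ)
    (hp : ∀ k : Fin N, (p k).totalDegree ≤ (k : ℕ)) :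
    {x : Fin N → ℂ | ∀ k : Fin N,
      eval x (esymm (Fin N) ℂ ((k : ℕ) + 1)) = eval x (p k)}.Finite := by
  classical
  set f : Fin N → MvPolynomial (Fin N) ℂ :=
    fun k => esymm (Fin N) ℂ ((k : ℕ) + 1) - p k with hf
  set I : Ideal (MvPolynomial (Fin N) ℂ) := Ideal.span (Set.range f) with hI
  set g : Fin N → MvPolynomial (Fin N) ℂ := fun i =>
    ∑ k : Fin N, (-1 : MvPolynomial (Fin N) ℂ) ^ (k : ℕ)
      * p k * X i ^ (N - 1 - (k : ℕ)) with hg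
  have hXg : ∀ i : Fin N, (X i : MvPolynomial (Fin N) ℂ) ^ N - g i ∈ I := by
    intro i
    have hdiff : (X i : MvPolynomial (Fin N) ℂ) ^ N - g i
        = ∑ k : Fin N, ((-1 : MvPolynomial (Fin N) ℂ) ^ (k : ℕ)
            * X i ^ (N - 1 - (k : ℕ))) * f k := by
      rw [Xi_pow_eq hN i, hg, hf, ← Finset.sum_sub_distrib]
      exact Finset.sum_congr rfl fun k _ => by ring
    rw [hdiff]
    exact Submodule.sum_mem _ fun k _ =>
      Ideal.mul_mem_left _ _ (Ideal.subset_span ⟨k, rfl⟩)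
  have hgdeg : ∀ i, (g i).totalDegree ≤ N - 1 := by
    intro i
    rw [hg]
    refine le_trans (totalDegree_finset_sum _ _) (Finset.sup_le fun k _ => ?_)
    refine le_trans (totalDegree_mul _ _) ?_
    have h1 : ((-1 : MvPolynomial (Fin N) ℂ) ^ (k : ℕ) * p k).totalDegree ≤ (k : ℕ) := by
      refine le_trans (totalDegree_mul _ _) ?_
      have : ((-1 : MvPolynomial (Fin N) ℂ) ^ (k : ℕ)).totalDegree = 0 := by
        refine le_antisymm (le_trans (totalDegree_pow _ _) ?_) (Nat.zero_le _)
        rw [totalDegree_neg, totalDegree_one, Nat.mul_zero]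
      rw [this, Nat.zero_add]
      exact hp k
    have h2 : ((X i : MvPolynomial (Fin N) ℂ) ^ (N - 1 - (k : ℕ))).totalDegree
        ≤ N - 1 - (k : ℕ) := by
      refine le_trans (totalDegree_pow _ _) ?_
      rw [totalDegree_X]
      omega
    have hk : (k : ℕ) < N := k.isLt
    omega
  -- the quotient is finite dimensional
  set mka : MvPolynomial (Fin N) ℂ →ₐ[ℂ] MvPolynomial (Fin N) ℂ ⧸ I :=
    Ideal.Quotient.mkₐ ℂ I with hmka
  set V : Submodule ℂ (MvPolynomial (Fin N) ℂ ⧸ I) :=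
    Submodule.span ℂ ((fun μ : Fin N →₀ ℕ => mka (monomial μ 1))
      '' {μ | μ.degree ≤ (N - 1) * N}) with hV
  have key2 : ∀ s : ℕ, ∀ μ : Fin N →₀ ℕ, μ.degree ≤ s → mka (monomial μ 1) ∈ V := by
    intro s
    induction s using Nat.strong_induction_on with
    | _ s IH =>
    intro μ hμ
    by_cases hsm : μ.degree ≤ (N - 1) * N
    · exact Submodule.subset_span ⟨μ, hsm, rfl⟩
    · have hex : ∃ i, N ≤ μ i := by
        by_contra hcon
        push_neg at hcon
        have : μ.degree ≤ ∑ _i : Fin N, (N - 1) := by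
          rw [degree_eq_sum]
          exact Finset.sum_le_sum fun i _ => by have := hcon i; omega
        rw [Finset.sum_const, Finset.card_univ, Fintype.card_fin, smul_eq_mul,
          Nat.mul_comm] at this
        omega
      obtain ⟨i, hi⟩ := hex
      set μ'' : Fin N →₀ ℕ := μ - Finsupp.single i N with hμ''
      have hsum : Finsupp.single i N + μ'' = μ := by
        ext j
        have hle : Finsupp.single i N j ≤ μ j := by
          rcases eq_or_ne j i with rfl | hne
          · rwa [Finsupp.single_eq_same]
          · rw [Finsupp.single_eq_of_ne' (Ne.symm hne)]
            exact Nat.zero_le _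
        simp only [Finsupp.add_apply, hμ'', Finsupp.tsub_apply]
        omega
      have hdeg'' : N + μ''.degree = μ.degree := by
        have h4 := degree_add (Finsupp.single i N) μ''
        rw [hsum, degree_single] at h4
        omega
      have hmono : (monomial μ 1 : MvPolynomial (Fin N) ℂ)
          = X i ^ N * monomial μ'' 1 := by
        rw [X_pow_eq_monomial, monomial_mul, one_mul, hsum]
      have hq : mka (monomial μ 1) = mka (g i * monomial μ'' 1) := by
        rw [hmono]
        have : mka ((X i : MvPolynomial (Fin N) ℂ) ^ N * monomial μ'' 1)
            - mka (g i * monomial μ'' 1)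
            = mka (((X i : MvPolynomial (Fin N) ℂ) ^ N - g i) * monomial μ'' 1) := by
          rw [← map_sub]
          congr 1
          ring
        have hz : mka (((X i : MvPolynomial (Fin N) ℂ) ^ N - g i) * monomial μ'' 1) = 0 := by
          rw [hmka]
          simp only [Ideal.Quotient.mkₐ_eq_mk]
          rw [Ideal.Quotient.eq_zero_iff_mem]
          exact Ideal.mul_mem_right _ _ (hXg i)
        have := sub_eq_zero.mp (this.trans hz)
        exact this
      rw [hq]
      have htd : (g i * monomial μ'' 1).totalDegree ≤ μ.degree - 1 := by
        refine le_trans (totalDegree_mul _ _) ?_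
        have h5 : (monomial μ'' (1 : ℂ)).totalDegree = μ''.degree := by
          rw [totalDegree_monomial _ (one_ne_zero)]
          rfl
        have := hgdeg i
        omega
      rw [MvPolynomial.as_sum (g i * monomial μ'' 1), map_sum]
      refine Submodule.sum_mem _ fun κ hκ => ?_
      have hκdeg : κ.degree ≤ μ.degree - 1 :=
        le_trans (degree_le_totalDegree hκ) htd
      have hsmul : (monomial κ (coeff κ (g i * monomial μ'' 1)) : MvPolynomial (Fin N) ℂ)
          = coeff κ (g i * monomial μ'' 1) • monomial κ 1 := by
        rw [smul_monomial, smul_eq_mul, mul_one]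
      rw [hsmul, map_smul]
      refine Submodule.smul_mem _ _ ?_
      exact IH (s - 1) (by omega) κ (by omega)
  have hVtop : V = ⊤ := by
    rw [eq_top_iff]
    intro a _
    obtain ⟨q, rfl⟩ := Ideal.Quotient.mkₐ_surjective ℂ I a
    rw [show (Ideal.Quotient.mkₐ ℂ I) q = mka q from rfl]
    rw [MvPolynomial.as_sum q, map_sum]
    refine Submodule.sum_mem _ fun μ hμ => ?_
    have hsmul : (monomial μ (coeff μ q) : MvPolynomial (Fin N) ℂ)
        = coeff μ q • monomial μ 1 := by
      rw [smul_monomial, smul_eq_mul, mul_one]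
    rw [hsmul, map_smul]
    exact Submodule.smul_mem _ _ (key2 μ.degree μ le_rfl)
  haveI hfin : Module.Finite ℂ (MvPolynomial (Fin N) ℂ ⧸ I) := by
    rw [Module.finite_def]
    rw [← hVtop, hV]
    apply Submodule.fg_span
    apply Set.Finite.image
    exact Finsupp.finite_of_degree_le _
  haveI := Algebra.IsIntegral.of_finite ℂ (MvPolynomial (Fin N) ℂ ⧸ I)
  have hint : ∀ i : Fin N, IsIntegral ℂ (mka (X i)) :=
    fun i => Algebra.IsIntegral.isIntegral _
  choose q hqmonic hqev using hint
  refine Set.Finite.subset (Set.Finite.pi (t := fun i => {z : ℂ | (q i).IsRoot z})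
    (fun i => ?_)) ?_
  · refine Set.Finite.subset ((q i).roots.toFinset.finite_toSet) fun z hz => ?_
    exact Multiset.mem_toFinset.mpr (Polynomial.mem_roots'.mpr ⟨(hqmonic i).ne_zero, hz⟩)
  · intro x hx
    simp only [Set.mem_setOf_eq] at hx
    have h0 : ∀ a ∈ I, (aeval x : MvPolynomial (Fin N) ℂ →ₐ[ℂ] ℂ) a = 0 := by
      intro a ha
      rw [hI] at ha
      refine Submodule.span_induction (p := fun a _ => (aeval x) a = 0) ?_ ?_ ?_ ?_ ha
      · rintro _ ⟨k, rfl⟩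
        rw [hf]
        dsimp only
        rw [map_sub, aeval_eq_eval, aeval_eq_eval, hx k, sub_self]
      · exact map_zero _
      · intro a b _ _ ha hb
        rw [map_add, ha, hb, add_zero]
      · intro a b _ hb
        rw [smul_eq_mul, map_mul, hb, mul_zero]
    set φ : (MvPolynomial (Fin N) ℂ ⧸ I) →ₐ[ℂ] ℂ := Ideal.Quotient.liftₐ I (aeval x) h0
      with hφ
    intro i _
    show (q i).IsRoot (x i)
    have h1 : φ (mka (X i)) = x i := by
      rw [hφ, hmka]
      simp only [Ideal.Quotient.mkₐ_eq_mk, Ideal.Quotient.liftₐ_apply]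
      change (aeval x) (X i) = x i
      exact aeval_X x i
    have h2 : Polynomial.aeval (mka (X i)) (q i) = 0 := by
      rw [Polynomial.aeval_def]
      exact hqev i
    have h3 := congrArg φ h2
    rw [← Polynomial.aeval_algHom_apply, h1, map_zero] at h3
    show Polynomial.eval (x i) (q i) = 0
    rw [← Polynomial.coe_aeval_eq_eval]
    exact h3




lemma solset_nonempty {N : ℕ} (hN : 1 ≤ N) (p : Fin N → MvPolynomial (Fin N) ℂ)
    (hp : ∀ k : Fin N, (p k).totalDegree ≤ (k : ℕ)) :
    {x : Fin N → ℂ | ∀ k : Fin N,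
      eval x (esymm (Fin N) ℂ ((k : ℕ) + 1)) = eval x (p k)}.Nonempty := by
  classical
  obtain ⟨M, rfl⟩ : ∃ M, N = M + 1 := ⟨N - 1, by omega⟩
  set F : Fin (M + 1) → MvPolynomial (Fin (M + 2)) ℂ := fun k =>
    rename Fin.succ (esymm (Fin (M + 1)) ℂ ((k : ℕ) + 1)) - Hg (p k) ((k : ℕ) + 1) with hF
  have hFhom : ∀ k, (F k).IsHomogeneous ((k : ℕ) + 1) := fun k =>
    ((esymm_isHomogeneous (M + 1) ((k : ℕ) + 1)).rename_isHomogeneous).sub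
      (Hg_isHomogeneous (le_trans (hp k) (by omega)))
  set J : Ideal (MvPolynomial (Fin (M + 2)) ℂ) := Ideal.span (Set.range F) with hJ
  by_cases hcase : ∃ z ∈ zeroLocus ℂ J, z 0 ≠ 0
  · obtain ⟨z, hz, hz0⟩ := hcase
    refine ⟨fun j => z j.succ / z 0, fun k => ?_⟩
    have hFz : eval z (F k) = 0 :=
      mem_zeroLocus_iff.mp hz _ (Ideal.subset_span ⟨k, rfl⟩)
    rw [hF] at hFz
    dsimp only at hFz
    rw [map_sub, eval_rename,
      Hg_eval_of_ne_zero (le_trans (hp k) (by omega)) z hz0] at hFz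
    have hsc : eval (z ∘ Fin.succ) (esymm (Fin (M + 1)) ℂ ((k : ℕ) + 1))
        = z 0 ^ ((k : ℕ) + 1)
          * eval (fun j => z j.succ / z 0) (esymm (Fin (M + 1)) ℂ ((k : ℕ) + 1)) := by
      have hfun : (z ∘ Fin.succ) = fun j : Fin (M + 1) => z 0 * (z j.succ / z 0) := by
        funext j
        rw [mul_div_cancel₀ _ hz0]
        rfl
      rw [hfun]
      exact eval_homog_smul (esymm_isHomogeneous _ _) _ _
    rw [hsc] at hFz
    have h2 := sub_eq_zero.mp hFz
    exact mul_left_cancel₀ (pow_ne_zero _ hz0) h2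
  · exfalso
    push_neg at hcase
    have hzero : ∀ z ∈ zeroLocus ℂ J, z = 0 := by
      intro z hz
      have hz0 : z 0 = 0 := hcase z hz
      have hzs : ∀ k : Fin (M + 1),
          eval (z ∘ Fin.succ) (esymm (Fin (M + 1)) ℂ ((k : ℕ) + 1)) = 0 := by
        intro k
        have hFz : eval z (F k) = 0 :=
          mem_zeroLocus_iff.mp hz _ (Ideal.subset_span ⟨k, rfl⟩)
        rw [hF] at hFz
        dsimp only at hFz
        rw [map_sub, eval_rename,
          Hg_eval_of_zero (lt_of_le_of_lt (hp k) (by omega)) z hz0, sub_zero] at hFz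
        exact hFz
      have hv := esymm_vanish (by omega) (z ∘ Fin.succ) hzs
      funext j
      induction j using Fin.cases with
      | zero => exact hz0
      | succ i => exact congrFun hv i
    have hrad : ∀ j : Fin (M + 2), ∃ r : ℕ,
        (X j : MvPolynomial (Fin (M + 2)) ℂ) ^ r ∈ J := by
      intro j
      rw [← Ideal.mem_radical_iff, ← vanishingIdeal_zeroLocus_eq_radical (K := ℂ) J,
        mem_vanishingIdeal_iff]
      intro z hz
      rw [hzero z hz]
      simp
    exact core F hFhom hrad


end EsymmAux

/-- The system `S_k(x) = p_k(x)`, `k = 1, …, N`, where `S_k` is the `k`-th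
elementary symmetric polynomial and `deg p_k ≤ k-1`, has a nonempty finite
solution set in `ℂ^N`. -/
theorem esymm_system_nonempty_finite (N : ℕ) (hN : 1 ≤ N)
    (p : Fin N → MvPolynomial (Fin N) ℂ)
    (hp : ∀ k : Fin N, (p k).totalDegree ≤ (k : ℕ)) :
    {x : Fin N → ℂ |
        ∀ k : Fin N,
          MvPolynomial.eval x (MvPolynomial.esymm (Fin N) ℂ ((k : ℕ) + 1))
            = MvPolynomial.eval x (p k)}.Nonempty ∧
    {x : Fin N → ℂ |
        ∀ k : Fin N,
          MvPolynomial.eval x (MvPolynomial.esymm (Fin N) ℂ ((k : ℕ) + 1))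
            = MvPolynomial.eval x (p k)}.Finite := by
  exact ⟨EsymmAux.solset_nonempty hN p hp, EsymmAux.solset_finite hN p hp⟩
end

section
/- For the period-4 discrete Schrödinger operator with a(n) ≡ -1 and 4-periodic potential b with b(1) = b(4) = α + σ√2, b(2) = b(3) = α - σ√2/2 (σ ∈ {-1,1}, α ∈ ℂ), the Dirichlet polynomial v(4; λ) equals -λ³ + 3αλ² - (3α² - 7/2)λ + α³ - 7α/2; in particular it is independent of the sign σ. -/
/-- For `a(n) ≡ -1` and the 4-periodic potential with `b(1)=b(4)=α+σ√2`,
`b(2)=b(3)=α-σ√2/2` (`σ² = 1`), the Dirichlet polynomial satisfies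
`v(4;λ) = -λ³ + 3αλ² - (3α² - 7/2)λ + α³ - 7α/2`, independently of `σ`. -/
theorem dirichlet_poly_independent_of_sign (α σ : ℂ) (hσ : σ ^ 2 = 1)
    (b : ℤ → ℂ)
    (hb1 : b 1 = α + σ * Real.sqrt 2) (hb4 : b 4 = α + σ * Real.sqrt 2)
    (hb2 : b 2 = α - σ * (Real.sqrt 2 / 2)) (hb3 : b 3 = α - σ * (Real.sqrt 2 / 2))
    (lam : ℂ) (v : ℤ → ℂ)
    (hv : ∀ n : ℤ, -v (n + 1) - v (n - 1) + b n * v n = lam * v n)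
    (hv0 : v 0 = 0) (hv1 : v 1 = 1) :
    v 4 = -lam ^ 3 + 3 * α * lam ^ 2 - (3 * α ^ 2 - 7 / 2) * lam + α ^ 3 - 7 * α / 2 := by
  have h1 := hv 1
  have h2 := hv 2
  have h3 := hv 3
  norm_num at h1 h2 h3
  have hv2 : v 2 = b 1 - lam := by
    rw [hv0, hv1] at h1; linear_combination -h1
  have hv3 : v 3 = (b 2 - lam) * v 2 - 1 := by
    rw [hv1] at h2; linear_combination -h2
  have hv4 : v 4 = (b 3 - lam) * v 3 - v 2 := by linear_combination -h3
  have hs2 : (Real.sqrt 2 : ℂ) ^ 2 = 2 := by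
    norm_cast
    rw [Real.sq_sqrt] <;> norm_num
  rw [hv4, hv3, hv2, hb1, hb2, hb3]
  set s : ℂ := (Real.sqrt 2 : ℂ)
  linear_combination (σ ^ 2 * (s * σ / 4 - 3 * (α - lam) / 4)) * hs2 +
    (s * σ / 2 - 3 * (α - lam) / 2) * hσ
end

section
/- The system of equations in (b₁, b₂, b₃, b₄) ∈ ℂ⁴: S₁ = 0, S₂ = 0, S₃ = 0, and S₄ = b₁b₂ + b₂b₃ + b₃b₄ + b₄b₁ (where S_k are the elementary symmetric polynomials) has exactly nine solutions: the zero solution and the eight vectors obtained from (1+i, 1-i, -1+i, -1-i) by cyclic permutation and complex conjugation. -/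
open Complex

/-- The system `S₁ = S₂ = S₃ = 0`, `S₄ = b₁b₂ + b₂b₃ + b₃b₄ + b₄b₁` in `ℂ⁴` has
exactly nine solutions: zero, the four cyclic permutations of
`(1+i, 1-i, -1+i, -1-i)`, and their componentwise complex conjugates. -/
theorem four_periodic_potential_solutions (b₁ b₂ b₃ b₄ : ℂ) :
    (b₁ + b₂ + b₃ + b₄ = 0 ∧
     b₁ * b₂ + b₁ * b₃ + b₁ * b₄ + b₂ * b₃ + b₂ * b₄ + b₃ * b₄ = 0 ∧
     b₁ * b₂ * b₃ + b₁ * b₂ * b₄ + b₁ * b₃ * b₄ + b₂ * b₃ * b₄ = 0 ∧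
     b₁ * b₂ * b₃ * b₄ = b₁ * b₂ + b₂ * b₃ + b₃ * b₄ + b₄ * b₁) ↔
    ((b₁, b₂, b₃, b₄) = (0, 0, 0, 0) ∨
     (b₁, b₂, b₃, b₄) = (1 + I, 1 - I, -1 + I, -1 - I) ∨
     (b₁, b₂, b₃, b₄) = (-1 - I, 1 + I, 1 - I, -1 + I) ∨
     (b₁, b₂, b₃, b₄) = (-1 + I, -1 - I, 1 + I, 1 - I) ∨
     (b₁, b₂, b₃, b₄) = (1 - I, -1 + I, -1 - I, 1 + I) ∨
     (b₁, b₂, b₃, b₄) = (1 - I, 1 + I, -1 - I, -1 + I) ∨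
     (b₁, b₂, b₃, b₄) = (-1 + I, 1 - I, 1 + I, -1 - I) ∨
     (b₁, b₂, b₃, b₄) = (-1 - I, -1 + I, 1 - I, 1 + I) ∨
     (b₁, b₂, b₃, b₄) = (1 + I, -1 - I, -1 + I, 1 - I)) := by
  have hI : (I : ℂ) ^ 2 = -1 := Complex.I_sq
  constructor
  · rintro ⟨h1, h2, h3, h4⟩
    have h4eq : b₄ = -b₁ - b₂ - b₃ := by linear_combination h1
    subst h4eq
    rcases eq_or_ne (b₁ + b₃) 0 with hs | hs
    · -- zero solution case
      have hb3 : b₃ = -b₁ := by linear_combination hs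
      subst hb3
      have e1 : b₁ ^ 2 + b₂ ^ 2 = 0 := by linear_combination -h2
      have e2 : b₁ ^ 2 * b₂ ^ 2 = 0 := by linear_combination h4
      have hb1 : b₁ = 0 ∧ b₂ = 0 := by
        rcases mul_eq_zero.mp e2 with h | h
        · have : b₂ ^ 2 = 0 := by linear_combination e1 - h
          exact ⟨pow_eq_zero_iff two_ne_zero |>.mp h,
                 pow_eq_zero_iff two_ne_zero |>.mp this⟩
        · have : b₁ ^ 2 = 0 := by linear_combination e1 - h
          exact ⟨pow_eq_zero_iff two_ne_zero |>.mp this,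
                 pow_eq_zero_iff two_ne_zero |>.mp h⟩
      obtain ⟨hb1, hb2⟩ := hb1
      subst hb1; subst hb2
      left; norm_num
    · -- nonzero case
      have h3' : (b₁ + b₃) * (b₂ * (-b₁ - b₂ - b₃) - b₁ * b₃) = 0 := by
        linear_combination h3
      have hq : b₂ * (-b₁ - b₂ - b₃) = b₁ * b₃ := by
        rcases mul_eq_zero.mp h3' with h | h
        · exact absurd h hs
        · linear_combination h
      have hp2 : (b₁ * b₃) * (b₁ * b₃ + 2) = 0 := by
        linear_combination h4 + h2 - (b₁ * b₃ + 1) * hq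
      have hp : b₁ * b₃ = -2 := by
        rcases mul_eq_zero.mp hp2 with h | h
        · exfalso
          have hss : (b₁ + b₃) ^ 2 = 0 := by linear_combination -h2 + hq + 2 * h
          exact hs (pow_eq_zero_iff two_ne_zero |>.mp hss)
        · linear_combination h
      have hss : (b₁ + b₃) ^ 2 = -4 := by linear_combination -h2 + hq + 2 * hp
      have hfac : (b₁ + b₃ - 2 * I) * (b₁ + b₃ + 2 * I) = 0 := by
        linear_combination hss - 4 * hI
      rcases mul_eq_zero.mp hfac with hsv | hsv
      · -- b₁ + b₃ = 2I
        have hs2 : b₁ + b₃ = 2 * I := by linear_combination hsv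
        have hf1 : (b₁ - (1 + I)) * (b₁ - (-1 + I)) = 0 := by
          linear_combination -hp + b₁ * hs2 + hI
        have hf2 : (b₂ - (1 - I)) * (b₂ - (-1 - I)) = 0 := by
          linear_combination -hq - hp - b₂ * hs2 + hI
        rcases mul_eq_zero.mp hf1 with ha | ha <;>
          rcases mul_eq_zero.mp hf2 with hb | hb
        · refine Or.inr (Or.inl ?_)
          simp only [Prod.mk.injEq]
          exact ⟨by linear_combination ha, by linear_combination hb,
                 by linear_combination hs2 - ha,
                 by linear_combination -hs2 - hb⟩
        · refine Or.inr (Or.inr (Or.inr (Or.inr (Or.inr (Or.inr (Or.inr (Or.inr ?_)))))))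
          simp only [Prod.mk.injEq]
          exact ⟨by linear_combination ha, by linear_combination hb,
                 by linear_combination hs2 - ha,
                 by linear_combination -hs2 - hb⟩
        · refine Or.inr (Or.inr (Or.inr (Or.inr (Or.inr (Or.inr (Or.inl ?_))))))
          simp only [Prod.mk.injEq]
          exact ⟨by linear_combination ha, by linear_combination hb,
                 by linear_combination hs2 - ha,
                 by linear_combination -hs2 - hb⟩
        · refine Or.inr (Or.inr (Or.inr (Or.inl ?_)))
          simp only [Prod.mk.injEq]
          exact ⟨by linear_combination ha, by linear_combination hb,
                 by linear_combination hs2 - ha,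
                 by linear_combination -hs2 - hb⟩
      · -- b₁ + b₃ = -2I
        have hs2 : b₁ + b₃ = -2 * I := by linear_combination hsv
        have hf1 : (b₁ - (1 - I)) * (b₁ - (-1 - I)) = 0 := by
          linear_combination -hp + b₁ * hs2 + hI
        have hf2 : (b₂ - (1 + I)) * (b₂ - (-1 + I)) = 0 := by
          linear_combination -hq - hp - b₂ * hs2 + hI
        rcases mul_eq_zero.mp hf1 with ha | ha <;>
          rcases mul_eq_zero.mp hf2 with hb | hb
        · refine Or.inr (Or.inr (Or.inr (Or.inr (Or.inr (Or.inl ?_)))))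
          simp only [Prod.mk.injEq]
          exact ⟨by linear_combination ha, by linear_combination hb,
                 by linear_combination hs2 - ha,
                 by linear_combination -hs2 - hb⟩
        · refine Or.inr (Or.inr (Or.inr (Or.inr (Or.inl ?_))))
          simp only [Prod.mk.injEq]
          exact ⟨by linear_combination ha, by linear_combination hb,
                 by linear_combination hs2 - ha,
                 by linear_combination -hs2 - hb⟩
        · refine Or.inr (Or.inr (Or.inl ?_))
          simp only [Prod.mk.injEq]
          exact ⟨by linear_combination ha, by linear_combination hb,
                 by linear_combination hs2 - ha,
                 by linear_combination -hs2 - hb⟩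
        · refine Or.inr (Or.inr (Or.inr (Or.inr (Or.inr (Or.inr (Or.inr (Or.inl ?_)))))))
          simp only [Prod.mk.injEq]
          exact ⟨by linear_combination ha, by linear_combination hb,
                 by linear_combination hs2 - ha,
                 by linear_combination -hs2 - hb⟩
  · rintro (h | h | h | h | h | h | h | h | h) <;>
      (simp only [Prod.mk.injEq] at h; obtain ⟨e1, e2, e3, e4⟩ := h;
       subst e1; subst e2; subst e3; subst e4;
       refine ⟨?_, ?_, ?_, ?_⟩ <;> (simp [Complex.ext_iff] <;> norm_num))
end
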